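/- If G is a triangle-free graph with Δ(H) = 4 where H = G[V \ N[u]] for a vertex u of maximum degree 4 and |V(G)| = 10, then χ_1(G) ≤ 2. (Equivalently: a triangle-free graph of order 10 with maximum degree 4 in which the graph induced on the non-neighbours of a maximum-degree vertex also has maximum degree 4 is a subgraph of K_{5,5}, hence bipartite, hence (2,1)-colourable.) -/

import Mathlib

open SimpleGraph

/-- A set `U` is `k`-independent in `G` if every vertex of `U` has at most `k`
neighbours inside `U` (i.e. the induced subgraph has maximum degree at most `k`). -/
def KIndep {V : Type*} (G : SimpleGraph V) (k : ℕ) (U : Set V) : Prop :=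
  ∀ v ∈ U, {w | w ∈ U ∧ G.Adj v w}.ncard ≤ k

/-- `G` is `(m,k)`-colourable: the vertices can be coloured with `m` colours so that
every colour class is `k`-independent. -/
def DefColorable {V : Type*} (G : SimpleGraph V) (m k : ℕ) : Prop :=
  ∃ c : V → Fin m, ∀ i : Fin m, KIndep G k {v | c v = i}

/-- The `k`-defective chromatic number: the least `m` such that `G` is `(m,k)`-colourable. -/
noncomputable def defChrom {V : Type*} (G : SimpleGraph V) (k : ℕ) : ℕ :=
  sInf {m | DefColorable G m k}

/-- A triangle-free graph of order 10 with maximum degree 4, in which the subgraph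
induced on the non-neighbours of a maximum-degree vertex also has maximum degree 4,
has 1-defective chromatic number at most 2. -/
theorem stmt10 {V : Type*} [Fintype V] (G : SimpleGraph V) [DecidableRel G.Adj]
    (hcard : Fintype.card V = 10) (hG : G.CliqueFree 3)
    (u : V) (hu : G.degree u = 4) (hmax : G.maxDegree = 4)
    (B : Set V) (hB : B = (G.neighborSet u ∪ {u})ᶜ)
    (hH1 : ∀ z ∈ B, {w | w ∈ B ∧ G.Adj z w}.ncard ≤ 4)
    (hH2 : ∃ z ∈ B, {w | w ∈ B ∧ G.Adj z w}.ncard = 4) :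
    defChrom G 1 ≤ 2 := by
  classical
  obtain ⟨z, hzB, hz4⟩ := hH2
  have hdeg : ∀ v : V, (G.neighborSet v).ncard = G.degree v := by
    intro v
    rw [Set.ncard_eq_toFinset_card']
    simp [SimpleGraph.degree, SimpleGraph.neighborFinset_def]
  have hNu : (G.neighborSet u).ncard = 4 := by rw [hdeg, hu]
  have huNu : u ∉ G.neighborSet u := by simp
  have hNu1 : (G.neighborSet u ∪ {u}).ncard = 5 := by
    rw [Set.union_singleton, Set.ncard_insert_of_notMem huNu, hNu]
  have hBcard : B.ncard = 5 := by
    have h := Set.ncard_add_ncard_compl (G.neighborSet u ∪ {u})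
    rw [hNu1, Nat.card_eq_fintype_card, hcard, ← hB] at h
    omega
  have hSsub : {w | w ∈ B ∧ G.Adj z w} ⊆ G.neighborSet z := fun w hw => hw.2
  have hNz : G.neighborSet z = {w | w ∈ B ∧ G.Adj z w} := by
    refine (Set.eq_of_subset_of_ncard_le hSsub ?_).symm
    rw [hdeg, hz4, ← hmax]
    exact G.degree_le_maxDegree z
  have hNzcard : (G.neighborSet z).ncard = 4 := by rw [hNz, hz4]
  have hBzcard : (B \ {z}).ncard = 4 := by
    rw [Set.ncard_diff_singleton_of_mem hzB, hBcard]
  have hNzB : G.neighborSet z = B \ {z} := by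
    refine Set.eq_of_subset_of_ncard_le ?_ (by rw [hNzcard, hBzcard]) (B.toFinite.diff)
    intro w hw
    refine ⟨(hNz ▸ hw).1, ?_⟩
    simp only [Set.mem_singleton_iff]
    rintro rfl
    exact G.irrefl hw
  -- no triangles
  have htri : ∀ a b c : V, G.Adj a b → G.Adj a c → G.Adj b c → False := by
    intro a b c hab hac hbc
    exact hG {a, b, c} (SimpleGraph.is3Clique_triple_iff.mpr ⟨hab, hac, hbc⟩)
  -- membership in B
  have hBmem : ∀ v : V, v ∈ B ↔ ¬ G.Adj u v ∧ v ≠ u := by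
    intro v
    simp only [hB, Set.mem_compl_iff, Set.mem_union, Set.mem_singleton_iff, SimpleGraph.mem_neighborSet, not_or]
  -- the coloring
  set A : Set V := G.neighborSet u ∪ {z} with hA
  refine Nat.sInf_le ?_
  refine ⟨fun v => if v ∈ A then 0 else 1, ?_⟩
  intro i v hv
  have hempty : {w | w ∈ {x | (if x ∈ A then (0 : Fin 2) else 1) = i} ∧ G.Adj v w} = ∅ := by
    rw [Set.eq_empty_iff_forall_notMem]
    rintro w ⟨hwi, hadj⟩
    simp only [Set.mem_setOf_eq] at hv hwi
    by_cases hvA : v ∈ A <;> by_cases hwA : w ∈ A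
    · -- both in A : independent
      rcases hvA with hvN | hvz <;> rcases hwA with hwN | hwz
      · exact htri u v w hvN hwN hadj
      · simp only [Set.mem_singleton_iff] at hwz; subst hwz
        have : v ∈ G.neighborSet w := G.adj_symm hadj
        rw [hNzB] at this
        exact ((hBmem v).mp this.1).1 hvN
      · simp only [Set.mem_singleton_iff] at hvz; subst hvz
        have : w ∈ G.neighborSet v := hadj
        rw [hNzB] at this
        exact ((hBmem w).mp this.1).1 hwN
      · simp only [Set.mem_singleton_iff] at hvz hwz
        subst hvz; subst hwz; exact G.irrefl hadj
    · rw [if_pos hvA] at hv; rw [if_neg hwA] at hwi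
      exact absurd (hv.trans hwi.symm) (by decide)
    · rw [if_neg hvA] at hv; rw [if_pos hwA] at hwi
      exact absurd (hwi.trans hv.symm) (by decide)
    · -- both outside A : also independent
      simp only [hA, Set.union_singleton, Set.mem_insert_iff, Set.mem_union,
        Set.mem_singleton_iff, not_or] at hvA hwA
      obtain ⟨hvz, hvN⟩ := hvA
      obtain ⟨hwz, hwN⟩ := hwA
      by_cases hvu : v = u
      · subst hvu; exact hwN hadj
      by_cases hwu : w = u
      · subst hwu; exact hvN (G.adj_symm hadj)
      have hvB : v ∈ B := (hBmem v).mpr ⟨fun h => hvN (SimpleGraph.mem_neighborSet G u v |>.mp h), hvu⟩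
      have hwB : w ∈ B := (hBmem w).mpr ⟨fun h => hwN h, hwu⟩
      have hv' : v ∈ G.neighborSet z := by rw [hNzB]; exact ⟨hvB, hvz⟩
      have hw' : w ∈ G.neighborSet z := by rw [hNzB]; exact ⟨hwB, hwz⟩
      exact htri z v w hv' hw' hadj
  rw [hempty, Set.ncard_empty]
  exact Nat.zero_le 1
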